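/- arXiv:1212.3920 — 3 statements merged into one kernel-verified Lean document; each statement's English description precedes it below -/
import Mathlib

section
/- With σ₀(κ) = (√(1+4κ) − 1)/2, one has the small-κ expansion c(κ)/σ₀(κ) = 1/n + κ/n + O(κ²); precisely, (c(κ)/σ₀(κ) − 1/n)/κ → 1/n as κ → 0⁺. -/
open MeasureTheory Real Filter

/-- The order parameter `c(κ)` of the von Mises distribution in dimension `n`. -/
noncomputable def orderParam (n : ℕ) (κ : ℝ) : ℝ :=
  (∫ θ in (0:ℝ)..π, Real.cos θ * Real.exp (κ * Real.cos θ) * Real.sin θ ^ (n - 2)) /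
  (∫ θ in (0:ℝ)..π, Real.exp (κ * Real.cos θ) * Real.sin θ ^ (n - 2))

/-- The inverse `σ₀` of `h(r) = r + r²`, arising from `ν(|J|) = |J|`, `τ(|J|) = 1/(1+|J|)`. -/
noncomputable def σ₀ (κ : ℝ) : ℝ := (Real.sqrt (1 + 4 * κ) - 1) / 2

namespace OPAux

/-- ∫ cos θ sin^k θ = 0 on [0, π]. -/
lemma int_cos_sin_pow (k : ℕ) : ∫ θ in (0:ℝ)..π, Real.cos θ * Real.sin θ ^ k = 0 := by
  have h : ∀ θ ∈ Set.uIcc (0:ℝ) π, HasDerivAt (fun θ => Real.sin θ ^ (k+1) / (k+1))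
      (Real.cos θ * Real.sin θ ^ k) θ := by
    intro θ _
    have h1 : HasDerivAt (fun θ => Real.sin θ ^ (k+1) / ((k:ℝ)+1))
        (((k+1:ℕ):ℝ) * Real.sin θ ^ (k+1-1) * Real.cos θ / ((k:ℝ)+1)) θ :=
      ((Real.hasDerivAt_sin θ).pow (k+1)).div_const ((k:ℝ)+1)
    convert h1 using 1
    have : ((k:ℝ)+1) ≠ 0 := by positivity
    push_cast
    field_simp
  rw [intervalIntegral.integral_eq_sub_of_hasDerivAt h
    ((Real.continuous_cos.mul (Real.continuous_sin.pow k)).intervalIntegrable _ _)]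
  simp

lemma int_cos3_sin_pow (k : ℕ) : ∫ θ in (0:ℝ)..π, Real.cos θ ^ 3 * Real.sin θ ^ k = 0 := by
  have heq : ∀ θ : ℝ, Real.cos θ ^ 3 * Real.sin θ ^ k
      = Real.cos θ * Real.sin θ ^ k - Real.cos θ * Real.sin θ ^ (k+2) := by
    intro θ
    have h := Real.cos_sq' θ
    calc Real.cos θ ^ 3 * Real.sin θ ^ k = Real.cos θ * Real.cos θ ^ 2 * Real.sin θ ^ k := by ring
      _ = Real.cos θ * (1 - Real.sin θ ^ 2) * Real.sin θ ^ k := by rw [h]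
      _ = Real.cos θ * Real.sin θ ^ k - Real.cos θ * Real.sin θ ^ (k+2) := by ring
  rw [intervalIntegral.integral_congr (fun θ _ => heq θ), intervalIntegral.integral_sub
    (f := fun θ => Real.cos θ * Real.sin θ ^ k) (g := fun θ => Real.cos θ * Real.sin θ ^ (k+2))
    ((Real.continuous_cos.mul (Real.continuous_sin.pow k)).intervalIntegrable _ _)
    ((Real.continuous_cos.mul (Real.continuous_sin.pow (k+2))).intervalIntegrable _ _),
    int_cos_sin_pow, int_cos_sin_pow, sub_zero]

lemma int_cos2_sin_pow (k : ℕ) :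
    ∫ θ in (0:ℝ)..π, Real.cos θ ^ 2 * Real.sin θ ^ k
      = (1/((k:ℝ)+2)) * ∫ θ in (0:ℝ)..π, Real.sin θ ^ k := by
  have heq : ∀ θ : ℝ, Real.cos θ ^ 2 * Real.sin θ ^ k
      = Real.sin θ ^ k - Real.sin θ ^ (k+2) := by
    intro θ
    have h := Real.cos_sq' θ
    calc Real.cos θ ^ 2 * Real.sin θ ^ k = (1 - Real.sin θ ^ 2) * Real.sin θ ^ k := by rw [h]
      _ = Real.sin θ ^ k - Real.sin θ ^ (k+2) := by ring
  rw [intervalIntegral.integral_congr (fun θ _ => heq θ), intervalIntegral.integral_sub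
    (f := fun θ => Real.sin θ ^ k) (g := fun θ => Real.sin θ ^ (k+2))
    ((Real.continuous_sin.pow k).intervalIntegrable _ _)
    ((Real.continuous_sin.pow (k+2)).intervalIntegrable _ _),
    integral_sin_pow]
  have hk : ((k:ℝ)+2) ≠ 0 := by positivity
  simp only [Real.sin_pi, Real.sin_zero]
  field_simp
  ring

lemma exp_taylor3 {x : ℝ} (hx : |x| ≤ 1) : |Real.exp x - 1 - x - x^2/2| ≤ |x|^3 := by
  have h := Real.exp_bound hx (n := 3) (by norm_num)
  have hsum : (∑ i ∈ Finset.range 3, x ^ i / (Nat.factorial i : ℝ)) = 1 + x + x^2/2 := by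
    simp [Finset.sum_range_succ, Nat.factorial]
  rw [hsum] at h
  have h2 : Real.exp x - 1 - x - x^2/2 = Real.exp x - (1 + x + x^2/2) := by ring
  rw [h2]
  calc |Real.exp x - (1 + x + x^2/2)| ≤ |x|^3 * ((3:ℕ).succ / ((Nat.factorial 3 : ℝ) * 3)) := h
    _ ≤ |x|^3 * 1 := by
        apply mul_le_mul_of_nonneg_left _ (by positivity)
        norm_num [Nat.factorial]
    _ = |x|^3 := mul_one _

lemma expand_A (k : ℕ) {κ : ℝ} (h0 : 0 ≤ κ) (h1 : κ ≤ 1) :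
    |(∫ θ in (0:ℝ)..π, Real.exp (κ * Real.cos θ) * Real.sin θ ^ k)
      - ∫ θ in (0:ℝ)..π, Real.sin θ ^ k| ≤ κ^2 * π := by
  have hA : IntervalIntegrable (fun θ => Real.exp (κ * Real.cos θ) * Real.sin θ ^ k) volume 0 π := by
    apply Continuous.intervalIntegrable; fun_prop
  have hs : IntervalIntegrable (fun θ : ℝ => Real.sin θ ^ k) volume 0 π :=
    ((Real.continuous_sin.pow k).intervalIntegrable _ _)
  have hc : IntervalIntegrable (fun θ : ℝ => Real.cos θ * Real.sin θ ^ k) volume 0 π :=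
    ((Real.continuous_cos.mul (Real.continuous_sin.pow k)).intervalIntegrable _ _)
  have key : (∫ θ in (0:ℝ)..π, (Real.exp (κ * Real.cos θ) - 1 - κ * Real.cos θ) * Real.sin θ ^ k)
      = (∫ θ in (0:ℝ)..π, Real.exp (κ * Real.cos θ) * Real.sin θ ^ k)
        - (∫ θ in (0:ℝ)..π, Real.sin θ ^ k)
        - κ * ∫ θ in (0:ℝ)..π, Real.cos θ * Real.sin θ ^ k := by
    have heq : (fun θ => (Real.exp (κ * Real.cos θ) - 1 - κ * Real.cos θ) * Real.sin θ ^ k)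
        = fun θ => Real.exp (κ * Real.cos θ) * Real.sin θ ^ k - Real.sin θ ^ k
            - κ * (Real.cos θ * Real.sin θ ^ k) := by
      funext θ; ring
    rw [heq, intervalIntegral.integral_sub (hA.sub hs) (hc.const_mul κ),
      intervalIntegral.integral_sub hA hs, intervalIntegral.integral_const_mul]
  simp only [int_cos_sin_pow, mul_zero, sub_zero] at key
  rw [← key]
  have hbd : ∀ θ ∈ Set.uIoc (0:ℝ) π,
      ‖(Real.exp (κ * Real.cos θ) - 1 - κ * Real.cos θ) * Real.sin θ ^ k‖ ≤ κ^2 := by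
    intro θ _
    have hx : |κ * Real.cos θ| ≤ 1 := by
      rw [abs_mul, abs_of_nonneg h0]
      calc κ * |Real.cos θ| ≤ 1 * 1 :=
        mul_le_mul h1 (Real.abs_cos_le_one θ) (abs_nonneg _) zero_le_one
      _ = 1 := one_mul 1
    have h2 := Real.abs_exp_sub_one_sub_id_le hx
    rw [Real.norm_eq_abs, abs_mul]
    calc |Real.exp (κ * Real.cos θ) - 1 - κ * Real.cos θ| * |Real.sin θ ^ k|
        ≤ (κ * Real.cos θ)^2 * 1 := by
          apply mul_le_mul h2 _ (abs_nonneg _) (by positivity)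
          rw [abs_pow]
          exact pow_le_one₀ (abs_nonneg _) (Real.abs_sin_le_one θ)
      _ = κ^2 * Real.cos θ ^ 2 := by ring
      _ ≤ κ^2 * 1 := by
          apply mul_le_mul_of_nonneg_left _ (by positivity)
          exact Real.cos_sq_le_one θ
      _ = κ^2 := mul_one _
  calc ‖∫ θ in (0:ℝ)..π, (Real.exp (κ * Real.cos θ) - 1 - κ * Real.cos θ) * Real.sin θ ^ k‖
      ≤ κ^2 * |π - 0| := intervalIntegral.norm_integral_le_of_norm_le_const hbd
    _ = κ^2 * π := by rw [sub_zero, abs_of_nonneg Real.pi_pos.le]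

lemma expand_B (k : ℕ) {κ : ℝ} (h0 : 0 ≤ κ) (h1 : κ ≤ 1) :
    |(∫ θ in (0:ℝ)..π, Real.cos θ * Real.exp (κ * Real.cos θ) * Real.sin θ ^ k)
      - κ * ∫ θ in (0:ℝ)..π, Real.cos θ ^ 2 * Real.sin θ ^ k| ≤ κ^3 * π := by
  have hB : IntervalIntegrable (fun θ => Real.cos θ * Real.exp (κ * Real.cos θ) * Real.sin θ ^ k)
      volume 0 π := by apply Continuous.intervalIntegrable; fun_prop
  have hc : IntervalIntegrable (fun θ : ℝ => Real.cos θ * Real.sin θ ^ k) volume 0 π :=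
    (((Real.continuous_cos).mul (Real.continuous_sin.pow k)).intervalIntegrable _ _)
  have hc2 : IntervalIntegrable (fun θ : ℝ => Real.cos θ ^ 2 * Real.sin θ ^ k) volume 0 π :=
    (((Real.continuous_cos.pow 2).mul (Real.continuous_sin.pow k)).intervalIntegrable _ _)
  have hc3 : IntervalIntegrable (fun θ : ℝ => Real.cos θ ^ 3 * Real.sin θ ^ k) volume 0 π :=
    (((Real.continuous_cos.pow 3).mul (Real.continuous_sin.pow k)).intervalIntegrable _ _)
  have key : (∫ θ in (0:ℝ)..π, Real.cos θ *
        (Real.exp (κ * Real.cos θ) - 1 - κ * Real.cos θ - (κ * Real.cos θ)^2/2) * Real.sin θ ^ k)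
      = (∫ θ in (0:ℝ)..π, Real.cos θ * Real.exp (κ * Real.cos θ) * Real.sin θ ^ k)
        - (∫ θ in (0:ℝ)..π, Real.cos θ * Real.sin θ ^ k)
        - κ * (∫ θ in (0:ℝ)..π, Real.cos θ ^ 2 * Real.sin θ ^ k)
        - (κ^2/2) * ∫ θ in (0:ℝ)..π, Real.cos θ ^ 3 * Real.sin θ ^ k := by
    have heq : (fun θ => Real.cos θ *
        (Real.exp (κ * Real.cos θ) - 1 - κ * Real.cos θ - (κ * Real.cos θ)^2/2) * Real.sin θ ^ k)
        = fun θ => Real.cos θ * Real.exp (κ * Real.cos θ) * Real.sin θ ^ k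
            - Real.cos θ * Real.sin θ ^ k - κ * (Real.cos θ ^ 2 * Real.sin θ ^ k)
            - (κ^2/2) * (Real.cos θ ^ 3 * Real.sin θ ^ k) := by
      funext θ; ring
    rw [heq, intervalIntegral.integral_sub ((hB.sub hc).sub (hc2.const_mul κ)) (hc3.const_mul (κ^2/2)),
      intervalIntegral.integral_sub (hB.sub hc) (hc2.const_mul κ),
      intervalIntegral.integral_sub hB hc, intervalIntegral.integral_const_mul,
      intervalIntegral.integral_const_mul]
  simp only [int_cos_sin_pow, int_cos3_sin_pow, mul_zero, sub_zero] at key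
  rw [← key]
  have hbd : ∀ θ ∈ Set.uIoc (0:ℝ) π,
      ‖Real.cos θ * (Real.exp (κ * Real.cos θ) - 1 - κ * Real.cos θ - (κ * Real.cos θ)^2/2)
        * Real.sin θ ^ k‖ ≤ κ^3 := by
    intro θ _
    have hx : |κ * Real.cos θ| ≤ 1 := by
      rw [abs_mul, abs_of_nonneg h0]
      calc κ * |Real.cos θ| ≤ 1 * 1 :=
        mul_le_mul h1 (Real.abs_cos_le_one θ) (abs_nonneg _) zero_le_one
      _ = 1 := one_mul 1
    have h2 := exp_taylor3 hx
    rw [Real.norm_eq_abs, abs_mul, abs_mul]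
    have hxk : |κ * Real.cos θ|^3 ≤ κ^3 := by
      rw [abs_mul, abs_of_nonneg h0, mul_pow]
      calc κ^3 * |Real.cos θ|^3 ≤ κ^3 * 1 := by
            apply mul_le_mul_of_nonneg_left _ (by positivity)
            exact pow_le_one₀ (abs_nonneg _) (Real.abs_cos_le_one θ)
        _ = κ^3 := mul_one _
    calc |Real.cos θ| * |Real.exp (κ * Real.cos θ) - 1 - κ * Real.cos θ - (κ * Real.cos θ)^2/2|
          * |Real.sin θ ^ k|
        ≤ 1 * |κ * Real.cos θ|^3 * 1 := by
          apply mul_le_mul _ _ (abs_nonneg _) (by positivity)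
          · exact mul_le_mul (Real.abs_cos_le_one θ) h2 (abs_nonneg _) zero_le_one
          · rw [abs_pow]; exact pow_le_one₀ (abs_nonneg _) (Real.abs_sin_le_one θ)
      _ = |κ * Real.cos θ|^3 := by ring
      _ ≤ κ^3 := hxk
  calc ‖∫ θ in (0:ℝ)..π, Real.cos θ *
        (Real.exp (κ * Real.cos θ) - 1 - κ * Real.cos θ - (κ * Real.cos θ)^2/2) * Real.sin θ ^ k‖
      ≤ κ^3 * |π - 0| := intervalIntegral.norm_integral_le_of_norm_le_const hbd
    _ = κ^3 * π := by rw [sub_zero, abs_of_nonneg Real.pi_pos.le]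

lemma sigma0_pos {κ : ℝ} (h : 0 < κ) : 0 < σ₀ κ := by
  have : (1:ℝ) < Real.sqrt (1 + 4 * κ) := by
    nlinarith [Real.sq_sqrt (show (0:ℝ) ≤ 1 + 4 * κ by linarith), Real.sqrt_nonneg (1 + 4 * κ)]
  unfold σ₀
  linarith

lemma sigma0_asymp {κ : ℝ} (h : 0 < κ) :
    (σ₀ κ - κ)/κ^2 = -2/(Real.sqrt (1 + 4 * κ) + 1 + 2 * κ) := by
  have hs : Real.sqrt (1 + 4 * κ) ^ 2 = 1 + 4 * κ := Real.sq_sqrt (by linarith)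
  have hs0 : 0 ≤ Real.sqrt (1 + 4 * κ) := Real.sqrt_nonneg _
  have hd : (0:ℝ) < Real.sqrt (1 + 4 * κ) + 1 + 2 * κ := by linarith
  unfold σ₀
  field_simp
  nlinarith [hs]

end OPAux

/-- Small-`κ` expansion: `c(κ)/σ₀(κ) = 1/n + κ/n + O(κ²)`, in the precise form
`(c(κ)/σ₀(κ) - 1/n)/κ → 1/n` as `κ → 0⁺`. -/
theorem orderParam_div_sigma0_small_kappa (n : ℕ) (hn : 2 ≤ n) :
    Tendsto (fun κ : ℝ => (orderParam n κ / σ₀ κ - 1 / n) / κ)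
      (nhdsWithin 0 (Set.Ioi 0)) (nhds (1 / n)) := by
  obtain ⟨k, rfl⟩ : ∃ k, n = k + 2 := ⟨n - 2, by omega⟩
  set M : ℝ := ∫ θ in (0:ℝ)..π, Real.sin θ ^ k with hMdef
  have hMpos : 0 < M := integral_sin_pow_pos (n := k)
  set A : ℝ → ℝ := fun κ => ∫ θ in (0:ℝ)..π, Real.exp (κ * Real.cos θ) * Real.sin θ ^ k
    with hAdef
  set B : ℝ → ℝ := fun κ => ∫ θ in (0:ℝ)..π, Real.cos θ * Real.exp (κ * Real.cos θ) * Real.sin θ ^ k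
    with hBdef
  have hm2 : (∫ θ in (0:ℝ)..π, Real.cos θ ^ 2 * Real.sin θ ^ k) = M / ((k:ℝ)+2) := by
    rw [OPAux.int_cos2_sin_pow]; ring
  have hk2 : ((k:ℝ)+2) ≠ 0 := by positivity
  -- eventually facts
  have hev : ∀ᶠ κ : ℝ in nhdsWithin 0 (Set.Ioi 0), 0 < κ ∧ κ ≤ 1 := by
    filter_upwards [Ioo_mem_nhdsGT_of_mem (Set.mem_Ico.mpr ⟨le_refl (0:ℝ), one_pos⟩)] with κ hκ
    exact ⟨hκ.1, hκ.2.le⟩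
  have hlin : Tendsto (fun κ : ℝ => κ * π) (nhdsWithin 0 (Set.Ioi 0)) (nhds 0) := by
    have : Tendsto (fun κ : ℝ => κ * π) (nhds 0) (nhds (0 * π)) :=
      (continuous_id.mul (continuous_const (y := π))).tendsto (0:ℝ)
    simpa using this.mono_left nhdsWithin_le_nhds
  -- T1 : (A - M)/κ → 0
  have T1 : Tendsto (fun κ => (A κ - M)/κ) (nhdsWithin 0 (Set.Ioi 0)) (nhds 0) := by
    apply squeeze_zero_norm' _ hlin
    filter_upwards [hev] with κ ⟨h0, h1⟩
    rw [Real.norm_eq_abs, abs_div, abs_of_pos h0, div_le_iff₀ h0]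
    calc |A κ - M| ≤ κ^2 * π := OPAux.expand_A k h0.le h1
      _ = κ * π * κ := by ring
  -- T2 : (B - κ M/(k+2))/κ² → 0
  have T2 : Tendsto (fun κ => (B κ - κ * (M/((k:ℝ)+2)))/κ^2) (nhdsWithin 0 (Set.Ioi 0)) (nhds 0) := by
    apply squeeze_zero_norm' _ hlin
    filter_upwards [hev] with κ ⟨h0, h1⟩
    rw [Real.norm_eq_abs, abs_div, abs_of_pos (by positivity : (0:ℝ) < κ^2), div_le_iff₀ (by positivity)]
    calc |B κ - κ * (M/((k:ℝ)+2))| = |B κ - κ * ∫ θ in (0:ℝ)..π, Real.cos θ ^ 2 * Real.sin θ ^ k| := by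
          rw [hm2]
      _ ≤ κ^3 * π := OPAux.expand_B k h0.le h1
      _ = κ * π * κ^2 := by ring
  -- T4 : (σ₀ κ - κ)/κ² → -1
  have T4 : Tendsto (fun κ => (σ₀ κ - κ)/κ^2) (nhdsWithin 0 (Set.Ioi 0)) (nhds (-1)) := by
    have hcont : Tendsto (fun κ : ℝ => -2/(Real.sqrt (1 + 4 * κ) + 1 + 2 * κ))
        (nhds 0) (nhds (-1)) := by
      have h1 : ContinuousAt (fun κ : ℝ => -2/(Real.sqrt (1 + 4 * κ) + 1 + 2 * κ)) 0 := by
        apply ContinuousAt.div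
        · fun_prop
        · fun_prop
        · norm_num
      have h2 : -2/(Real.sqrt (1 + 4 * (0:ℝ)) + 1 + 2 * 0) = -1 := by
        rw [show (1:ℝ) + 4 * 0 = 1 by norm_num, Real.sqrt_one]; norm_num
      rw [← h2]
      exact h1.tendsto
    apply (hcont.mono_left nhdsWithin_le_nhds).congr'
    filter_upwards [self_mem_nhdsWithin] with κ hκ
    exact (OPAux.sigma0_asymp hκ).symm
  -- T3 : σ₀ κ/κ → 1
  have T3 : Tendsto (fun κ => σ₀ κ/κ) (nhdsWithin 0 (Set.Ioi 0)) (nhds 1) := by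
    have h := (T4.mul (tendsto_nhdsWithin_of_tendsto_nhds tendsto_id)).const_add 1
    have h2 : (1:ℝ) + -1 * 0 = 1 := by norm_num
    rw [h2] at h
    apply h.congr'
    filter_upwards [self_mem_nhdsWithin] with κ hκ
    have hκ' : κ ≠ 0 := ne_of_gt hκ
    field_simp
    simp only [id]
    ring
  -- T5 : A → M
  have T5 : Tendsto A (nhdsWithin 0 (Set.Ioi 0)) (nhds M) := by
    have h := (T1.mul (tendsto_nhdsWithin_of_tendsto_nhds tendsto_id)).const_add M
    have h2 : M + (0:ℝ) * 0 = M := by ring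
    rw [h2] at h
    apply h.congr'
    filter_upwards [self_mem_nhdsWithin] with κ hκ
    have hκ' : κ ≠ 0 := ne_of_gt hκ
    field_simp
    simp only [id]
    ring
  -- positivity of A
  have hApos : ∀ κ : ℝ, 0 < A κ := by
    intro κ
    apply intervalIntegral.intervalIntegral_pos_of_pos_on
    · apply Continuous.intervalIntegrable; fun_prop
    · intro θ hθ
      have := Real.sin_pos_of_pos_of_lt_pi hθ.1 hθ.2
      positivity
    · exact Real.pi_pos
  -- Numerator and denominator tendsto
  have hNum : Tendsto (fun κ => ((k:ℝ)+2) * ((B κ - κ * (M/((k:ℝ)+2)))/κ^2)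
      - ((A κ - M)/κ) * (σ₀ κ/κ) - M * ((σ₀ κ - κ)/κ^2))
      (nhdsWithin 0 (Set.Ioi 0)) (nhds M) := by
    have h := ((T2.const_mul ((k:ℝ)+2)).sub (T1.mul T3)).sub (T4.const_mul M)
    have h2 : ((k:ℝ)+2) * 0 - 0 * 1 - M * (-1) = M := by ring
    rwa [h2] at h
  have hDen : Tendsto (fun κ => ((k:ℝ)+2) * A κ * (σ₀ κ/κ))
      (nhdsWithin 0 (Set.Ioi 0)) (nhds (((k:ℝ)+2) * M)) := by
    have h := (T5.const_mul ((k:ℝ)+2)).mul T3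
    have h2 : ((k:ℝ)+2) * M * 1 = ((k:ℝ)+2) * M := by ring
    rwa [h2] at h
  have hfin := hNum.div hDen (by positivity)
  have hlim : M / (((k:ℝ)+2) * M) = 1 / ((k:ℝ)+2) := by
    rw [mul_comm, div_mul_eq_div_div, div_self hMpos.ne']
  rw [hlim] at hfin
  rw [show (1 / ((k + 2 : ℕ):ℝ)) = 1 / ((k:ℝ)+2) by push_cast; ring]
  apply hfin.congr'
  filter_upwards [self_mem_nhdsWithin] with κ hκ
  have hκ' : κ ≠ 0 := ne_of_gt hκ
  have hA' : A κ ≠ 0 := ne_of_gt (hApos κ)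
  have hσ' : σ₀ κ ≠ 0 := ne_of_gt (OPAux.sigma0_pos hκ)
  have hop : orderParam (k + 2) κ = B κ / A κ := by
    simp only [orderParam, Nat.add_sub_cancel, hAdef, hBdef]
  rw [hop]
  simp only [Pi.div_apply]
  field_simp
  ring
end

section
/- With σ₀(κ) = (√(1+4κ) − 1)/2, one has the large-κ behavior c(κ)/σ₀(κ) ∼ 1/√κ; precisely, √κ · c(κ)/σ₀(κ) → 1 as κ → ∞. -/
open MeasureTheory Real Filter

namespace OPAux

/-- The unnormalized density. -/
noncomputable def f (m : ℕ) (κ θ : ℝ) : ℝ := Real.exp (κ * Real.cos θ) * Real.sin θ ^ m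

lemma cont_f (m : ℕ) (κ : ℝ) : Continuous (f m κ) := by
  unfold f; continuity

lemma intable (m : ℕ) (κ a b : ℝ) : IntervalIntegrable (f m κ) volume a b :=
  (cont_f m κ).intervalIntegrable a b

lemma cont_g (m : ℕ) (κ : ℝ) : Continuous (fun θ => Real.cos θ * f m κ θ) := by
  unfold f; continuity

lemma intable_g (m : ℕ) (κ a b : ℝ) :
    IntervalIntegrable (fun θ => Real.cos θ * f m κ θ) volume a b :=
  (cont_g m κ).intervalIntegrable a b

lemma cont_h (m : ℕ) (κ : ℝ) : Continuous (fun θ => (1 - Real.cos θ) * f m κ θ) := by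
  unfold f; continuity

lemma intable_h (m : ℕ) (κ a b : ℝ) :
    IntervalIntegrable (fun θ => (1 - Real.cos θ) * f m κ θ) volume a b :=
  (cont_h m κ).intervalIntegrable a b

lemma f_nonneg (m : ℕ) (κ : ℝ) {θ : ℝ} (h0 : 0 ≤ θ) (hπ : θ ≤ π) : 0 ≤ f m κ θ :=
  mul_nonneg (Real.exp_pos _).le (pow_nonneg (Real.sin_nonneg_of_nonneg_of_le_pi h0 hπ) m)

lemma D_pos (m : ℕ) (κ : ℝ) : 0 < ∫ θ in (0:ℝ)..π, f m κ θ := by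
  apply intervalIntegral.intervalIntegral_pos_of_pos_on (intable m κ 0 π) _ Real.pi_pos
  intro x hx
  exact mul_pos (Real.exp_pos _) (pow_pos (Real.sin_pos_of_pos_of_lt_pi hx.1 hx.2) m)

/-- The core concentration estimate: the order parameter tends to `1`. -/
lemma tendsto_c (m : ℕ) :
    Tendsto (fun κ : ℝ =>
      (∫ θ in (0:ℝ)..π, Real.cos θ * f m κ θ) / (∫ θ in (0:ℝ)..π, f m κ θ))
      atTop (nhds 1) := by
  rw [Metric.tendsto_nhds]
  intro ε hε
  -- the splitting point δ
  set δ : ℝ := min (Real.sqrt ε) 1 with hδdef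
  have hδ0 : 0 < δ := lt_min (Real.sqrt_pos.2 hε) one_pos
  have hδ1 : δ ≤ 1 := min_le_right _ _
  have hδπ : δ < π := lt_of_le_of_lt hδ1 (by linarith [Real.pi_gt_three])
  -- on [0, δ] we have 1 - cos θ ≤ ε/2
  have hcos_small : ∀ θ ∈ Set.Icc (0:ℝ) δ, 1 - Real.cos θ ≤ ε / 2 := by
    intro θ hθ
    have h1 : θ ^ 2 ≤ ε := by
      have h2 : θ ≤ Real.sqrt ε := hθ.2.trans (min_le_left _ _)
      have := pow_le_pow_left₀ hθ.1 h2 2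
      rwa [Real.sq_sqrt hε.le] at this
    have := Real.one_sub_sq_div_two_le_cos (x := θ)
    linarith
  set c₁ : ℝ := Real.cos δ with hc₁
  set c₂ : ℝ := Real.cos (δ / 2) with hc₂
  have hc12 : c₁ < c₂ := by
    apply Real.strictAntiOn_cos ⟨by linarith, by linarith⟩ ⟨hδ0.le, hδπ.le⟩ (by linarith)
  have hsin3 : 0 < Real.sin (δ / 3) :=
    Real.sin_pos_of_pos_of_lt_pi (by linarith) (by linarith)
  set M : ℝ := Real.sin (δ / 3) ^ m with hM
  have hMpos : 0 < M := pow_pos hsin3 m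
  set K : ℝ := 12 * π / (δ * M) with hK
  have hKpos : 0 < K := by
    apply div_pos (by linarith [Real.pi_pos]) (mul_pos hδ0 hMpos)
  -- the tail term tends to 0
  have htail : Tendsto (fun κ : ℝ => K * Real.exp (κ * (c₁ - c₂))) atTop (nhds 0) := by
    have h1 : Tendsto (fun κ : ℝ => κ * (c₁ - c₂)) atTop atBot :=
      (tendsto_mul_const_atBot_of_neg (by linarith)).2 tendsto_id
    have h2 := (Real.tendsto_exp_atBot.comp h1).const_mul K
    simpa using h2
  filter_upwards [htail.eventually_lt_const (show (0:ℝ) < ε / 2 by linarith),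
    eventually_ge_atTop (0:ℝ)] with κ hκtail hκ0
  set D : ℝ := ∫ θ in (0:ℝ)..π, f m κ θ with hD
  set N : ℝ := ∫ θ in (0:ℝ)..π, Real.cos θ * f m κ θ with hN
  have hDpos : 0 < D := D_pos m κ
  -- N ≤ D
  have hNleD : N ≤ D := by
    apply intervalIntegral.integral_mono_on Real.pi_pos.le (intable_g m κ 0 π) (intable m κ 0 π)
    intro θ hθ
    nlinarith [f_nonneg m κ hθ.1 hθ.2, Real.cos_le_one θ]
  -- D - N = ∫ (1 - cos θ) f
  have hsub : D - N = ∫ θ in (0:ℝ)..π, (1 - Real.cos θ) * f m κ θ := by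
    rw [hD, hN, ← intervalIntegral.integral_sub (intable m κ 0 π) (intable_g m κ 0 π)]
    congr 1; funext θ; ring
  -- split the difference integral at δ
  have hsplit : (∫ θ in (0:ℝ)..π, (1 - Real.cos θ) * f m κ θ) =
      (∫ θ in (0:ℝ)..δ, (1 - Real.cos θ) * f m κ θ) +
      ∫ θ in δ..π, (1 - Real.cos θ) * f m κ θ :=
    (intervalIntegral.integral_add_adjacent_intervals (intable_h m κ 0 δ)
      (intable_h m κ δ π)).symm
  -- first piece
  have hpiece1 : (∫ θ in (0:ℝ)..δ, (1 - Real.cos θ) * f m κ θ) ≤ ε / 2 * D := by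
    have h1 : (∫ θ in (0:ℝ)..δ, (1 - Real.cos θ) * f m κ θ) ≤
        ∫ θ in (0:ℝ)..δ, ε / 2 * f m κ θ := by
      apply intervalIntegral.integral_mono_on hδ0.le (intable_h m κ 0 δ)
        ((continuous_const.mul (cont_f m κ)).intervalIntegrable 0 δ)
      intro θ hθ
      exact mul_le_mul_of_nonneg_right (hcos_small θ hθ)
        (f_nonneg m κ hθ.1 (hθ.2.trans hδπ.le))
    have h2 : (∫ θ in (0:ℝ)..δ, ε / 2 * f m κ θ) = ε / 2 * ∫ θ in (0:ℝ)..δ, f m κ θ :=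
      intervalIntegral.integral_const_mul _ _
    have h3 : (∫ θ in (0:ℝ)..δ, f m κ θ) ≤ D := by
      rw [hD, ← intervalIntegral.integral_add_adjacent_intervals (intable m κ 0 δ)
        (intable m κ δ π)]
      have : 0 ≤ ∫ θ in δ..π, f m κ θ := by
        apply intervalIntegral.integral_nonneg hδπ.le
        intro θ hθ; exact f_nonneg m κ (hδ0.le.trans hθ.1) hθ.2
      linarith
    calc (∫ θ in (0:ℝ)..δ, (1 - Real.cos θ) * f m κ θ) ≤ ε / 2 * ∫ θ in (0:ℝ)..δ, f m κ θ := by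
          rw [← h2]; exact h1
      _ ≤ ε / 2 * D := by
          apply mul_le_mul_of_nonneg_left h3 (by linarith)
  -- second piece
  have hpiece2 : (∫ θ in δ..π, (1 - Real.cos θ) * f m κ θ) ≤ (π - δ) * (2 * Real.exp (κ * c₁)) := by
    have h1 : (∫ θ in δ..π, (1 - Real.cos θ) * f m κ θ) ≤
        ∫ _ in δ..π, 2 * Real.exp (κ * c₁) := by
      apply intervalIntegral.integral_mono_on hδπ.le (intable_h m κ δ π)
        (intervalIntegrable_const)
      intro θ hθ
      have hθ0 : 0 ≤ θ := hδ0.le.trans hθ.1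
      have hcos : Real.cos θ ≤ c₁ :=
        Real.cos_le_cos_of_nonneg_of_le_pi hδ0.le hθ.2 hθ.1
      have hfle : f m κ θ ≤ Real.exp (κ * c₁) := by
        unfold f
        have h1 : Real.exp (κ * Real.cos θ) ≤ Real.exp (κ * c₁) :=
          Real.exp_le_exp.2 (mul_le_mul_of_nonneg_left hcos hκ0)
        have h2 : Real.sin θ ^ m ≤ 1 :=
          pow_le_one₀ (Real.sin_nonneg_of_nonneg_of_le_pi hθ0 hθ.2) (Real.sin_le_one θ)
        nlinarith [Real.exp_pos (κ * Real.cos θ),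
          pow_nonneg (Real.sin_nonneg_of_nonneg_of_le_pi hθ0 hθ.2) m]
      have hfnn : 0 ≤ f m κ θ := f_nonneg m κ hθ0 hθ.2
      nlinarith [Real.neg_one_le_cos θ, Real.exp_pos (κ * c₁)]
    rw [intervalIntegral.integral_const, smul_eq_mul] at h1
    exact h1
  -- lower bound for D
  have hlower : δ / 6 * (M * Real.exp (κ * c₂)) ≤ D := by
    have e1 : D = (∫ θ in (0:ℝ)..(δ/3), f m κ θ) + ((∫ θ in (δ/3)..(δ/2), f m κ θ) +
        ∫ θ in (δ/2)..π, f m κ θ) := by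
      rw [hD, intervalIntegral.integral_add_adjacent_intervals (intable m κ (δ/3) (δ/2))
        (intable m κ (δ/2) π),
        intervalIntegral.integral_add_adjacent_intervals (intable m κ 0 (δ/3))
        (intable m κ (δ/3) π)]
    have h1 : 0 ≤ ∫ θ in (0:ℝ)..(δ/3), f m κ θ := by
      apply intervalIntegral.integral_nonneg (by linarith)
      intro θ hθ; exact f_nonneg m κ hθ.1 (by linarith [hθ.2])
    have h2 : 0 ≤ ∫ θ in (δ/2)..π, f m κ θ := by
      apply intervalIntegral.integral_nonneg (by linarith)
      intro θ hθ; exact f_nonneg m κ (by linarith [hθ.1]) hθ.2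
    have h3 : (∫ _ in (δ/3)..(δ/2), M * Real.exp (κ * c₂)) ≤
        ∫ θ in (δ/3)..(δ/2), f m κ θ := by
      apply intervalIntegral.integral_mono_on (by linarith) intervalIntegrable_const
        (intable m κ (δ/3) (δ/2))
      intro θ hθ
      have hθ1 : δ/3 ≤ θ := hθ.1
      have hθ2 : θ ≤ δ/2 := hθ.2
      have hθ0 : 0 ≤ θ := by linarith
      have hcos : c₂ ≤ Real.cos θ :=
        Real.cos_le_cos_of_nonneg_of_le_pi hθ0 (by linarith) hθ2
      have hexp : Real.exp (κ * c₂) ≤ Real.exp (κ * Real.cos θ) :=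
        Real.exp_le_exp.2 (mul_le_mul_of_nonneg_left hcos hκ0)
      have hsin : Real.sin (δ/3) ≤ Real.sin θ := by
        apply Real.sin_le_sin_of_le_of_le_pi_div_two (by linarith [Real.pi_pos])
          (by linarith [Real.pi_gt_three]) hθ1
      have hpow : M ≤ Real.sin θ ^ m := pow_le_pow_left₀ hsin3.le hsin m
      unfold f
      calc M * Real.exp (κ * c₂) ≤ M * Real.exp (κ * Real.cos θ) :=
            mul_le_mul_of_nonneg_left hexp hMpos.le
        _ ≤ Real.sin θ ^ m * Real.exp (κ * Real.cos θ) :=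
            mul_le_mul_of_nonneg_right hpow (Real.exp_pos _).le
        _ = Real.exp (κ * Real.cos θ) * Real.sin θ ^ m := by ring
    rw [intervalIntegral.integral_const, smul_eq_mul] at h3
    have : δ/2 - δ/3 = δ/6 := by ring
    rw [this] at h3
    linarith
  clear_value M K c₁ c₂
  -- assemble: D - N < ε * D
  have hmain : D - N < ε * D := by
    have e1 : Real.exp (κ * c₁) = Real.exp (κ * c₂) * Real.exp (κ * (c₁ - c₂)) := by
      rw [← Real.exp_add]; ring_nf
    have e2 : (π - δ) * (2 * Real.exp (κ * c₁)) ≤ 2 * π * Real.exp (κ * c₁) := by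
      nlinarith [Real.exp_pos (κ * c₁)]
    have hKM : K * (δ * M) = 12 * π := by
      rw [hK]; exact div_mul_cancel₀ (12 * π) (ne_of_gt (mul_pos hδ0 hMpos))
    have e3 : 2 * π * Real.exp (κ * c₁) =
        (K * Real.exp (κ * (c₁ - c₂))) * (δ / 6 * (M * Real.exp (κ * c₂))) := by
      rw [e1]
      linear_combination -(Real.exp (κ * c₂) * Real.exp (κ * (c₁ - c₂)) / 6) * hKM
    have e4 : (K * Real.exp (κ * (c₁ - c₂))) * (δ / 6 * (M * Real.exp (κ * c₂))) ≤
        (K * Real.exp (κ * (c₁ - c₂))) * D :=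
      mul_le_mul_of_nonneg_left hlower (by positivity)
    have e5 : (K * Real.exp (κ * (c₁ - c₂))) * D < ε / 2 * D :=
      mul_lt_mul_of_pos_right hκtail hDpos
    have := hsub
    rw [hsplit] at this
    linarith
  have hfinal : 1 - N / D < ε := by
    have : 1 - N / D = (D - N) / D := by field_simp
    rw [this, div_lt_iff₀ hDpos]
    linarith
  rw [Real.dist_eq, abs_of_nonpos (by
    have : N / D ≤ 1 := (div_le_one hDpos).2 hNleD
    linarith)]
  linarith

/-- `√κ / σ₀ κ → 1`. -/
lemma tendsto_sqrt_div_sigma : Tendsto (fun κ : ℝ => Real.sqrt κ / σ₀ κ) atTop (nhds 1) := by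
  have heq : (fun κ : ℝ => Real.sqrt κ / σ₀ κ) =ᶠ[atTop]
      (fun κ : ℝ => Real.sqrt (1 / κ + 4) / 2 + 1 / (2 * Real.sqrt κ)) := by
    filter_upwards [eventually_gt_atTop (0:ℝ)] with κ hκ
    have hs : 0 < Real.sqrt κ := Real.sqrt_pos.2 hκ
    have ht : 1 < Real.sqrt (1 + 4 * κ) := by
      have h := Real.sqrt_lt_sqrt (by norm_num : (0:ℝ) ≤ 1) (by linarith : (1:ℝ) < 1 + 4 * κ)
      rwa [Real.sqrt_one] at h
    have ht2 : Real.sqrt (1 + 4 * κ) ^ 2 = 1 + 4 * κ := Real.sq_sqrt (by linarith)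
    have hs2 : Real.sqrt κ ^ 2 = κ := Real.sq_sqrt hκ.le
    have hst : Real.sqrt (1 / κ + 4) = Real.sqrt (1 + 4 * κ) / Real.sqrt κ := by
      rw [show 1 / κ + 4 = (1 + 4 * κ) / κ by field_simp, Real.sqrt_div (by linarith)]
    unfold σ₀
    rw [hst]
    have hrhs : Real.sqrt (1 + 4 * κ) / Real.sqrt κ / 2 + 1 / (2 * Real.sqrt κ) =
        (Real.sqrt (1 + 4 * κ) + 1) / (2 * Real.sqrt κ) := by
      field_simp
    rw [hrhs, div_eq_div_iff (by linarith) (by linarith)]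
    linear_combination 2 * hs2 - ht2 / 2
  have l1 : Tendsto (fun κ : ℝ => 1 / κ + 4) atTop (nhds 4) := by
    have := (tendsto_inv_atTop_zero : Tendsto (fun x : ℝ => x⁻¹) atTop (nhds 0)).add
      (tendsto_const_nhds (x := (4:ℝ)))
    simpa [one_div] using this
  have l2 : Tendsto (fun κ : ℝ => Real.sqrt (1 / κ + 4)) atTop (nhds 2) := by
    have := (Real.continuous_sqrt.tendsto 4).comp l1
    have h4 : Real.sqrt 4 = 2 := by
      rw [show (4:ℝ) = 2 ^ 2 by norm_num, Real.sqrt_sq (by norm_num : (0:ℝ) ≤ 2)]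
    simpa [Function.comp_def, h4] using this
  have hsq : Tendsto Real.sqrt atTop atTop := by
    rw [show Real.sqrt = fun x : ℝ => x ^ (1/2 : ℝ) from funext fun x => Real.sqrt_eq_rpow x]
    exact tendsto_rpow_atTop (by norm_num)
  have l3 : Tendsto (fun κ : ℝ => 1 / (2 * Real.sqrt κ)) atTop (nhds 0) := by
    have h2s : Tendsto (fun κ : ℝ => 2 * Real.sqrt κ) atTop atTop :=
      hsq.const_mul_atTop (by norm_num : (0:ℝ) < 2)
    have := tendsto_inv_atTop_zero.comp h2s
    simpa [one_div, Function.comp_def] using this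
  have hlim := (l2.div_const 2).add l3
  rw [show (2:ℝ)/2 + 0 = 1 by norm_num] at hlim
  exact Tendsto.congr' heq.symm hlim

end OPAux

/-- Large-`κ` behavior: `c(κ)/σ₀(κ) ∼ 1/√κ`, in the precise form
`√κ · c(κ)/σ₀(κ) → 1` as `κ → ∞`. -/
theorem orderParam_div_sigma0_large_kappa (n : ℕ) (hn : 2 ≤ n) :
    Tendsto (fun κ : ℝ => Real.sqrt κ * (orderParam n κ / σ₀ κ)) atTop (nhds 1) := by
  have h1 : Tendsto (orderParam n) atTop (nhds 1) := by
    have := OPAux.tendsto_c (n - 2)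
    convert this using 2 with κ
    unfold orderParam OPAux.f
    congr 1
    · congr 1; funext θ; ring
  have h2 := OPAux.tendsto_sqrt_div_sigma
  have h3 := h2.mul h1
  rw [one_mul] at h3
  convert h3 using 2 with κ
  ring
end

section
/- With σ₀(κ) = (√(1+4κ) − 1)/2, the infimum ρ_* = inf_{κ>0} σ₀(κ)/c(κ) is attained at some κ_* > 0 and satisfies 0 < ρ_* < n; moreover, for every ρ with ρ_* < ρ < n there exist at least two distinct solutions 0 < κ₁ < κ₂ of the compatibility equation σ₀(κ) = ρ c(κ). -/
open MeasureTheory Real Filter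

namespace HystAux

lemma exp_mul_le (x : ℝ) : Real.exp x * (1 - x) ≤ 1 := by
  have h := Real.add_one_le_exp (-x)
  have h2 : Real.exp x * (1 - x) ≤ Real.exp x * Real.exp (-x) :=
    mul_le_mul_of_nonneg_left (by linarith) (Real.exp_pos x).le
  simpa [← Real.exp_add] using h2

lemma cosh_mul_le (x : ℝ) (hx : x ^ 2 < 1) : Real.cosh x * (1 - x ^ 2) ≤ 1 := by
  have h1 := exp_mul_le x
  have h2 := exp_mul_le (-x)
  have hx1 : (0:ℝ) ≤ 1 - x := by nlinarith
  have hx2 : (0:ℝ) ≤ 1 + x := by nlinarith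
  have e1 := (Real.exp_pos x).le
  have e2 := (Real.exp_pos (-x)).le
  rw [Real.cosh_eq]
  nlinarith [mul_le_mul_of_nonneg_right h1 hx2, mul_le_mul_of_nonneg_right h2 hx1]

lemma self_le_sinh {x : ℝ} (hx : 0 ≤ x) : x ≤ Real.sinh x := by
  rcases hx.eq_or_lt with h | h
  · simp [← h]
  · exact (Real.self_lt_sinh_iff.mpr h).le

lemma sinh_le_mul_cosh {x : ℝ} (hx : 0 ≤ x) : Real.sinh x ≤ x * Real.cosh x := by
  have key : ∀ y : ℝ, HasDerivAt (fun t => t * Real.cosh t - Real.sinh t) (y * Real.sinh y) y := by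
    intro y
    have h1 : HasDerivAt (fun t : ℝ => t * Real.cosh t)
        (1 * Real.cosh y + y * Real.sinh y) y :=
      (hasDerivAt_id y).mul (Real.hasDerivAt_cosh y)
    have h2 := h1.sub (Real.hasDerivAt_sinh y)
    rw [show y * Real.sinh y = 1 * Real.cosh y + y * Real.sinh y - Real.cosh y by ring]
    exact h2
  have mono : MonotoneOn (fun t => t * Real.cosh t - Real.sinh t) (Set.Ici 0) := by
    apply monotoneOn_of_deriv_nonneg (convex_Ici 0)
    · exact ((continuous_id.mul Real.continuous_cosh).sub Real.continuous_sinh).continuousOn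
    · intro y _
      exact (key y).differentiableAt.differentiableWithinAt
    · intro y hy
      rw [(key y).deriv]
      rw [interior_Ici] at hy
      have hy' : (0:ℝ) < y := hy
      have : 0 ≤ Real.sinh y := Real.sinh_nonneg_iff.mpr hy'.le
      positivity
  have h0 := mono (Set.self_mem_Ici) (Set.mem_Ici.mpr hx) hx
  simp only [Real.cosh_zero, Real.sinh_zero, mul_one, zero_mul, sub_zero] at h0
  linarith [h0]

-- pointwise inequalities used under the integral
lemma mul_sinh_lb {κ : ℝ} (hκ : 0 ≤ κ) (x : ℝ) : κ * x ^ 2 ≤ x * Real.sinh (κ * x) := by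
  rcases le_or_gt 0 x with hx | hx
  · have h1 : κ * x ≤ Real.sinh (κ * x) := self_le_sinh (by positivity)
    nlinarith
  · have h2 : Real.sinh (κ * x) ≤ κ * x := by
      have : Real.sinh (κ * x) ≤ 0 → True := fun _ => trivial
      have hneg : κ * x ≤ 0 := mul_nonpos_of_nonneg_of_nonpos hκ hx.le
      have := self_le_sinh (x := -(κ * x)) (by linarith)
      rw [Real.sinh_neg] at this
      linarith
    nlinarith

lemma mul_sinh_ub {κ : ℝ} (hκ : 0 ≤ κ) {x : ℝ} (hx : |x| ≤ 1) :
    x * Real.sinh (κ * x) ≤ κ * Real.cosh κ * x ^ 2 := by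
  have heven : x * Real.sinh (κ * x) = |x| * Real.sinh (κ * |x|) := by
    rcases abs_cases x with ⟨h1, _⟩ | ⟨h1, _⟩
    · rw [h1]
    · rw [h1, mul_neg, Real.sinh_neg]; ring
  rw [heven]
  have h0x : 0 ≤ |x| := abs_nonneg x
  have h1 : Real.sinh (κ * |x|) ≤ κ * |x| * Real.cosh (κ * |x|) :=
    sinh_le_mul_cosh (by positivity)
  have h2 : Real.cosh (κ * |x|) ≤ Real.cosh κ := by
    rw [Real.cosh_le_cosh]
    rw [abs_of_nonneg (by positivity : (0:ℝ) ≤ κ * |x|), abs_of_nonneg hκ]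
    nlinarith
  have hc0 : 0 < Real.cosh (κ * |x|) := Real.cosh_pos _
  have hxsq : |x| * |x| = x ^ 2 := by rw [← abs_mul, ← sq, abs_sq]
  calc |x| * Real.sinh (κ * |x|) ≤ |x| * (κ * |x| * Real.cosh (κ * |x|)) :=
        mul_le_mul_of_nonneg_left h1 h0x
    _ ≤ |x| * (κ * |x| * Real.cosh κ) := by
        apply mul_le_mul_of_nonneg_left _ h0x
        apply mul_le_mul_of_nonneg_left h2 (by positivity)
    _ = κ * Real.cosh κ * x ^ 2 := by rw [← hxsq]; ring

noncomputable def W (m : ℕ) : ℝ := ∫ θ in (0:ℝ)..π, Real.sin θ ^ m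

noncomputable def NN (m : ℕ) (κ : ℝ) : ℝ :=
  ∫ θ in (0:ℝ)..π, Real.cos θ * Real.exp (κ * Real.cos θ) * Real.sin θ ^ m

noncomputable def DD (m : ℕ) (κ : ℝ) : ℝ :=
  ∫ θ in (0:ℝ)..π, Real.exp (κ * Real.cos θ) * Real.sin θ ^ m

lemma W_pos (m : ℕ) : 0 < W m := by unfold W; exact integral_sin_pow_pos m

lemma odd_vanish (m : ℕ) (g : ℝ → ℝ) (hg : ∀ x, g (-x) = - g x) :
    (∫ θ in (0:ℝ)..π, g (Real.cos θ) * Real.sin θ ^ m) = 0 := by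
  have h1 : (∫ θ in (0:ℝ)..π, (fun θ => g (Real.cos θ) * Real.sin θ ^ m) (π - θ))
      = ∫ θ in (0:ℝ)..π, g (Real.cos θ) * Real.sin θ ^ m := by
    rw [intervalIntegral.integral_comp_sub_left (fun θ => g (Real.cos θ) * Real.sin θ ^ m) π]
    norm_num
  have h2 : (∫ θ in (0:ℝ)..π, (fun θ => g (Real.cos θ) * Real.sin θ ^ m) (π - θ))
      = ∫ θ in (0:ℝ)..π, -(g (Real.cos θ) * Real.sin θ ^ m) := by
    apply intervalIntegral.integral_congr
    intro θ _
    simp [Real.cos_pi_sub, Real.sin_pi_sub, hg]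
  rw [intervalIntegral.integral_neg] at h2
  linarith [h1.symm.trans h2]

lemma DD_eq (m : ℕ) (κ : ℝ) :
    DD m κ = ∫ θ in (0:ℝ)..π, Real.cosh (κ * Real.cos θ) * Real.sin θ ^ m := by
  have h0 : ∀ θ : ℝ, Real.exp (κ * Real.cos θ) * Real.sin θ ^ m
      = Real.cosh (κ * Real.cos θ) * Real.sin θ ^ m
        + Real.sinh (κ * Real.cos θ) * Real.sin θ ^ m := by
    intro θ; rw [← Real.cosh_add_sinh]; ring
  unfold DD
  simp_rw [h0]
  rw [intervalIntegral.integral_add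
      ((by fun_prop : Continuous fun θ : ℝ =>
        Real.cosh (κ * Real.cos θ) * Real.sin θ ^ m).intervalIntegrable 0 π)
      ((by fun_prop : Continuous fun θ : ℝ =>
        Real.sinh (κ * Real.cos θ) * Real.sin θ ^ m).intervalIntegrable 0 π),
    odd_vanish m (fun x => Real.sinh (κ * x)) (by intro x; simp), add_zero]

lemma NN_eq (m : ℕ) (κ : ℝ) :
    NN m κ = ∫ θ in (0:ℝ)..π, Real.cos θ * Real.sinh (κ * Real.cos θ) * Real.sin θ ^ m := by
  have h0 : ∀ θ : ℝ, Real.cos θ * Real.exp (κ * Real.cos θ) * Real.sin θ ^ m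
      = Real.cos θ * Real.sinh (κ * Real.cos θ) * Real.sin θ ^ m
        + (Real.cos θ * Real.cosh (κ * Real.cos θ)) * Real.sin θ ^ m := by
    intro θ; rw [← Real.cosh_add_sinh]; ring
  unfold NN
  simp_rw [h0]
  rw [intervalIntegral.integral_add
      ((by fun_prop : Continuous fun θ : ℝ =>
        Real.cos θ * Real.sinh (κ * Real.cos θ) * Real.sin θ ^ m).intervalIntegrable 0 π)
      ((by fun_prop : Continuous fun θ : ℝ =>
        (Real.cos θ * Real.cosh (κ * Real.cos θ)) * Real.sin θ ^ m).intervalIntegrable 0 π),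
    odd_vanish m (fun x => x * Real.cosh (κ * x)) (by intro x; simp), add_zero]

lemma A_eq (m : ℕ) :
    (∫ θ in (0:ℝ)..π, Real.cos θ ^ 2 * Real.sin θ ^ m) = W m / (m + 2) := by
  have hint1 : IntervalIntegrable (fun θ : ℝ => Real.sin θ ^ m) volume 0 π :=
    (by fun_prop : Continuous fun θ : ℝ => Real.sin θ ^ m).intervalIntegrable 0 π
  have hint2 : IntervalIntegrable (fun θ : ℝ => Real.sin θ ^ (m + 2)) volume 0 π :=
    (by fun_prop : Continuous fun θ : ℝ => Real.sin θ ^ (m + 2)).intervalIntegrable 0 π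
  have hsplit : (∫ θ in (0:ℝ)..π, Real.cos θ ^ 2 * Real.sin θ ^ m)
      = (∫ θ in (0:ℝ)..π, Real.sin θ ^ m) - ∫ θ in (0:ℝ)..π, Real.sin θ ^ (m + 2) := by
    rw [← intervalIntegral.integral_sub hint1 hint2]
    apply intervalIntegral.integral_congr
    intro θ _
    have hc : Real.cos θ ^ 2 = 1 - Real.sin θ ^ 2 := by
      have := Real.sin_sq_add_cos_sq θ; linarith
    show Real.cos θ ^ 2 * Real.sin θ ^ m = Real.sin θ ^ m - Real.sin θ ^ (m + 2); rw [hc]; ring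
  have hred : (∫ θ in (0:ℝ)..π, Real.sin θ ^ (m + 2))
      = (m + 1) / (m + 2) * ∫ θ in (0:ℝ)..π, Real.sin θ ^ m := by
    rw [integral_sin_pow m]
    simp [Real.sin_pi]
  rw [hsplit, hred]
  unfold W
  have : ((m:ℝ) + 2) ≠ 0 := by positivity
  field_simp
  ring

lemma sin_pow_nonneg {m : ℕ} {θ : ℝ} (hθ : θ ∈ Set.Icc (0:ℝ) π) : 0 ≤ Real.sin θ ^ m :=
  pow_nonneg (Real.sin_nonneg_of_nonneg_of_le_pi hθ.1 hθ.2) m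

lemma NN_lb (m : ℕ) {κ : ℝ} (hκ : 0 ≤ κ) : κ * (W m / (m + 2)) ≤ NN m κ := by
  rw [NN_eq]
  have h : (∫ θ in (0:ℝ)..π, κ * (Real.cos θ ^ 2 * Real.sin θ ^ m))
      ≤ ∫ θ in (0:ℝ)..π, Real.cos θ * Real.sinh (κ * Real.cos θ) * Real.sin θ ^ m := by
    apply intervalIntegral.integral_mono_on Real.pi_pos.le
      ((by fun_prop : Continuous fun θ : ℝ =>
        κ * (Real.cos θ ^ 2 * Real.sin θ ^ m)).intervalIntegrable 0 π)
      ((by fun_prop : Continuous fun θ : ℝ =>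
        Real.cos θ * Real.sinh (κ * Real.cos θ) * Real.sin θ ^ m).intervalIntegrable 0 π)
    intro θ hθ
    have h1 := mul_sinh_lb hκ (Real.cos θ)
    have h2 := sin_pow_nonneg (m := m) hθ
    calc κ * (Real.cos θ ^ 2 * Real.sin θ ^ m) = (κ * Real.cos θ ^ 2) * Real.sin θ ^ m := by ring
      _ ≤ (Real.cos θ * Real.sinh (κ * Real.cos θ)) * Real.sin θ ^ m :=
        mul_le_mul_of_nonneg_right h1 h2
      _ = Real.cos θ * Real.sinh (κ * Real.cos θ) * Real.sin θ ^ m := by ring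
  calc κ * (W m / (m + 2)) = κ * ∫ θ in (0:ℝ)..π, Real.cos θ ^ 2 * Real.sin θ ^ m := by
        rw [A_eq]
    _ = ∫ θ in (0:ℝ)..π, κ * (Real.cos θ ^ 2 * Real.sin θ ^ m) := by
        rw [← intervalIntegral.integral_const_mul]
    _ ≤ _ := h

lemma NN_ub (m : ℕ) {κ : ℝ} (hκ : 0 ≤ κ) : NN m κ ≤ κ * Real.cosh κ * (W m / (m + 2)) := by
  rw [NN_eq]
  have h : (∫ θ in (0:ℝ)..π, Real.cos θ * Real.sinh (κ * Real.cos θ) * Real.sin θ ^ m)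
      ≤ ∫ θ in (0:ℝ)..π, (κ * Real.cosh κ) * (Real.cos θ ^ 2 * Real.sin θ ^ m) := by
    apply intervalIntegral.integral_mono_on Real.pi_pos.le
      ((by fun_prop : Continuous fun θ : ℝ =>
        Real.cos θ * Real.sinh (κ * Real.cos θ) * Real.sin θ ^ m).intervalIntegrable 0 π)
      ((by fun_prop : Continuous fun θ : ℝ =>
        (κ * Real.cosh κ) * (Real.cos θ ^ 2 * Real.sin θ ^ m)).intervalIntegrable 0 π)
    intro θ hθ
    have h1 := mul_sinh_ub hκ (Real.abs_cos_le_one θ)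
    have h2 := sin_pow_nonneg (m := m) hθ
    calc Real.cos θ * Real.sinh (κ * Real.cos θ) * Real.sin θ ^ m
        = (Real.cos θ * Real.sinh (κ * Real.cos θ)) * Real.sin θ ^ m := by ring
      _ ≤ (κ * Real.cosh κ * Real.cos θ ^ 2) * Real.sin θ ^ m :=
        mul_le_mul_of_nonneg_right h1 h2
      _ = (κ * Real.cosh κ) * (Real.cos θ ^ 2 * Real.sin θ ^ m) := by ring
  calc (∫ θ in (0:ℝ)..π, Real.cos θ * Real.sinh (κ * Real.cos θ) * Real.sin θ ^ m) ≤ _ := h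
    _ = (κ * Real.cosh κ) * ∫ θ in (0:ℝ)..π, Real.cos θ ^ 2 * Real.sin θ ^ m := by
        rw [← intervalIntegral.integral_const_mul]
    _ = κ * Real.cosh κ * (W m / (m + 2)) := by rw [A_eq]

lemma DD_lb (m : ℕ) (κ : ℝ) : W m ≤ DD m κ := by
  rw [DD_eq]
  unfold W
  apply intervalIntegral.integral_mono_on Real.pi_pos.le
    ((by fun_prop : Continuous fun θ : ℝ => Real.sin θ ^ m).intervalIntegrable 0 π)
    ((by fun_prop : Continuous fun θ : ℝ =>
      Real.cosh (κ * Real.cos θ) * Real.sin θ ^ m).intervalIntegrable 0 π)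
  intro θ hθ
  have h2 := sin_pow_nonneg (m := m) hθ
  nlinarith [Real.one_le_cosh (κ * Real.cos θ)]

lemma DD_pos (m : ℕ) (κ : ℝ) : 0 < DD m κ := lt_of_lt_of_le (W_pos m) (DD_lb m κ)

lemma NN_le_DD (m : ℕ) (κ : ℝ) : NN m κ ≤ DD m κ := by
  unfold NN DD
  apply intervalIntegral.integral_mono_on Real.pi_pos.le
    ((by fun_prop : Continuous fun θ : ℝ =>
      Real.cos θ * Real.exp (κ * Real.cos θ) * Real.sin θ ^ m).intervalIntegrable 0 π)
    ((by fun_prop : Continuous fun θ : ℝ =>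
      Real.exp (κ * Real.cos θ) * Real.sin θ ^ m).intervalIntegrable 0 π)
  intro θ hθ
  have h2 := sin_pow_nonneg (m := m) hθ
  have h3 := Real.cos_le_one θ
  have h4 : Real.cos θ * Real.exp (κ * Real.cos θ) ≤ Real.exp (κ * Real.cos θ) := by
    nlinarith [Real.exp_pos (κ * Real.cos θ)]
  exact mul_le_mul_of_nonneg_right h4 h2

lemma DD_ub14 (m : ℕ) : DD m (1/4) ≤ W m + (1/8) * (W m / (m + 2)) := by
  rw [DD_eq]
  have h : (∫ θ in (0:ℝ)..π, Real.cosh ((1/4) * Real.cos θ) * Real.sin θ ^ m)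
      ≤ ∫ θ in (0:ℝ)..π, (Real.sin θ ^ m + (1/8) * (Real.cos θ ^ 2 * Real.sin θ ^ m)) := by
    apply intervalIntegral.integral_mono_on Real.pi_pos.le
      ((by fun_prop : Continuous fun θ : ℝ =>
        Real.cosh ((1/4) * Real.cos θ) * Real.sin θ ^ m).intervalIntegrable 0 π)
      ((by fun_prop : Continuous fun θ : ℝ =>
        Real.sin θ ^ m + (1/8) * (Real.cos θ ^ 2 * Real.sin θ ^ m)).intervalIntegrable 0 π)
    intro θ hθ
    have h2 := sin_pow_nonneg (m := m) hθ
    have hcos : Real.cos θ ^ 2 ≤ 1 := by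
      nlinarith [Real.neg_one_le_cos θ, Real.cos_le_one θ]
    have hsq : ((1/4) * Real.cos θ) ^ 2 < 1 := by nlinarith
    have hch := cosh_mul_le ((1/4) * Real.cos θ) hsq
    have hchpos := Real.cosh_pos ((1/4) * Real.cos θ)
    -- cosh((1/4)cosθ) ≤ 1 + (1/8)cos²θ
    have hkey : Real.cosh ((1/4) * Real.cos θ) ≤ 1 + (1/8) * Real.cos θ ^ 2 := by
      nlinarith [hch, hchpos, hcos]
    nlinarith [mul_le_mul_of_nonneg_right hkey h2]
  have hsplit : (∫ θ in (0:ℝ)..π,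
        (Real.sin θ ^ m + (1/8) * (Real.cos θ ^ 2 * Real.sin θ ^ m)))
      = W m + (1/8) * (W m / (m + 2)) := by
    rw [intervalIntegral.integral_add
      ((by fun_prop : Continuous fun θ : ℝ => Real.sin θ ^ m).intervalIntegrable 0 π)
      ((by fun_prop : Continuous fun θ : ℝ =>
        (1/8) * (Real.cos θ ^ 2 * Real.sin θ ^ m)).intervalIntegrable 0 π),
      intervalIntegral.integral_const_mul, A_eq]
    rfl
  linarith [h, hsplit.le, hsplit.ge]

lemma NN_cont (m : ℕ) : Continuous (NN m) := by
  unfold NN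
  apply intervalIntegral.continuous_parametric_intervalIntegral_of_continuous'
  fun_prop

lemma DD_cont (m : ℕ) : Continuous (DD m) := by
  unfold DD
  apply intervalIntegral.continuous_parametric_intervalIntegral_of_continuous'
  fun_prop

end HystAux

namespace HystAux

lemma sigma_nonneg {κ : ℝ} (hκ : 0 ≤ κ) : 0 ≤ σ₀ κ := by
  unfold σ₀
  have h : 1 ≤ Real.sqrt (1 + 4 * κ) := by
    have h' := Real.sqrt_le_sqrt (show (1:ℝ) ≤ 1 + 4 * κ by linarith)
    rwa [Real.sqrt_one] at h'
  linarith

lemma sigma_lb {κ : ℝ} (hκ : 0 ≤ κ) : κ / (1 + κ) ≤ σ₀ κ := by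
  unfold σ₀
  have hs := Real.sq_sqrt (show (0:ℝ) ≤ 1 + 4 * κ by linarith)
  have hs0 := Real.sqrt_nonneg (1 + 4 * κ)
  set s := Real.sqrt (1 + 4 * κ) with hsdef
  have h1 : 1 + 3 * κ ≤ s * (1 + κ) := by
    by_contra hcon
    push_neg at hcon
    have ha : 0 ≤ s * (1 + κ) := mul_nonneg hs0 (by linarith)
    have hsq : (s * (1 + κ)) ^ 2 < (1 + 3 * κ) ^ 2 := by nlinarith
    nlinarith [hs, mul_nonneg (mul_nonneg hκ hκ) hκ]
  rw [div_le_iff₀ (by linarith : (0:ℝ) < 1 + κ)]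
  nlinarith

lemma sigma_pos {κ : ℝ} (hκ : 0 < κ) : 0 < σ₀ κ :=
  lt_of_lt_of_le (div_pos hκ (by linarith)) (sigma_lb hκ.le)

lemma sigma_mono : Monotone σ₀ := by
  intro a b h
  unfold σ₀
  have := Real.sqrt_le_sqrt (show 1 + 4 * a ≤ 1 + 4 * b by linarith)
  linarith

lemma sigma_M (n : ℕ) : σ₀ ((n:ℝ) ^ 2 + n) = n := by
  unfold σ₀
  rw [show (1 + 4 * ((n:ℝ) ^ 2 + n)) = (2 * (n:ℝ) + 1) ^ 2 by ring,
    Real.sqrt_sq (by positivity)]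
  ring

lemma sigma_14 : σ₀ (1/4) ≤ 83 / 400 := by
  unfold σ₀
  have h : Real.sqrt (1 + 4 * (1/4 : ℝ)) ≤ 283 / 200 := by
    rw [show (1 + 4 * (1/4 : ℝ)) = 2 by norm_num,
      show (283/200 : ℝ) = Real.sqrt ((283/200) ^ 2) from (Real.sqrt_sq (by norm_num)).symm]
    exact Real.sqrt_le_sqrt (by norm_num)
  linarith

end HystAux

set_option maxHeartbeats 1000000 in
/-- The infimum `ρ_* = inf_{κ>0} σ₀(κ)/c(κ)` is attained at some `κ_* > 0` and satisfies
`0 < ρ_* < n`; moreover for every `ρ_* < ρ < n` the compatibility equation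
`σ₀(κ) = ρ c(κ)` has at least two distinct positive solutions. -/
theorem hysteresis_two_solutions (n : ℕ) (hn : 2 ≤ n) :
    ∃ κstar : ℝ, 0 < κstar ∧
      σ₀ κstar / orderParam n κstar
        = sInf ((fun κ : ℝ => σ₀ κ / orderParam n κ) '' Set.Ioi 0) ∧
      0 < sInf ((fun κ : ℝ => σ₀ κ / orderParam n κ) '' Set.Ioi 0) ∧
      sInf ((fun κ : ℝ => σ₀ κ / orderParam n κ) '' Set.Ioi 0) < n ∧
      ∀ ρ : ℝ, sInf ((fun κ : ℝ => σ₀ κ / orderParam n κ) '' Set.Ioi 0) < ρ → ρ < n →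
        ∃ κ₁ κ₂ : ℝ, 0 < κ₁ ∧ κ₁ < κ₂ ∧
          σ₀ κ₁ = ρ * orderParam n κ₁ ∧ σ₀ κ₂ = ρ * orderParam n κ₂ := by
  classical
  have hm2 : ((n - 2 : ℕ) : ℝ) + 2 = (n : ℝ) := by
    have h : (n - 2) + 2 = n := by omega
    exact_mod_cast congrArg (Nat.cast : ℕ → ℝ) h
  have hn2 : (2:ℝ) ≤ (n:ℝ) := by exact_mod_cast hn
  have hnpos : (0:ℝ) < n := by linarith
  set W : ℝ := HystAux.W (n - 2) with hWdef
  set NN : ℝ → ℝ := HystAux.NN (n - 2) with hNNdef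
  set DD : ℝ → ℝ := HystAux.DD (n - 2) with hDDdef
  set F : ℝ → ℝ := fun κ => σ₀ κ / orderParam n κ with hFdef
  have hOP : ∀ κ, orderParam n κ = NN κ / DD κ := fun κ => rfl
  have hWpos : 0 < W := HystAux.W_pos _
  have hNlb : ∀ κ : ℝ, 0 ≤ κ → κ * (W / n) ≤ NN κ := by
    intro κ hκ
    have h := HystAux.NN_lb (n - 2) hκ
    rwa [hm2] at h
  have hNub : ∀ κ : ℝ, 0 ≤ κ → NN κ ≤ κ * Real.cosh κ * (W / n) := by
    intro κ hκ
    have h := HystAux.NN_ub (n - 2) hκ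
    rwa [hm2] at h
  have hDlb : ∀ κ, W ≤ DD κ := HystAux.DD_lb _
  have hDpos : ∀ κ, 0 < DD κ := HystAux.DD_pos _
  have hND : ∀ κ, NN κ ≤ DD κ := HystAux.NN_le_DD _
  have hD14 : DD (1/4) ≤ W + (1/8) * (W / n) := by
    have h := HystAux.DD_ub14 (n - 2)
    rwa [hm2] at h
  have hNpos : ∀ κ : ℝ, 0 < κ → 0 < NN κ := by
    intro κ hκ
    have h := hNlb κ hκ.le
    have h2 : 0 < κ * (W / n) := by positivity
    linarith
  have hOPpos : ∀ κ : ℝ, 0 < κ → 0 < orderParam n κ := by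
    intro κ hκ
    rw [hOP]
    exact div_pos (hNpos κ hκ) (hDpos κ)
  have hFeq : ∀ κ : ℝ, F κ = σ₀ κ * DD κ / NN κ := by
    intro κ
    show σ₀ κ / orderParam n κ = _
    rw [hOP, div_div_eq_mul_div]
  -- master lower bound near 0
  have hlow : ∀ κ : ℝ, 0 < κ → κ < 1 → (n:ℝ) * (1 - κ) ≤ F κ := by
    intro κ h0 h1
    rw [hFeq, le_div_iff₀ (hNpos κ h0)]
    have hub := hNub κ h0.le
    have hch : Real.cosh κ * (1 - κ ^ 2) ≤ 1 := HystAux.cosh_mul_le κ (by nlinarith)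
    have hchpos := Real.cosh_pos κ
    have hσ := HystAux.sigma_lb h0.le
    have hσ0 := HystAux.sigma_nonneg h0.le
    have step1 : (n:ℝ) * (1 - κ) * NN κ ≤ (n:ℝ) * (1 - κ) * (κ * Real.cosh κ * (W / n)) :=
      mul_le_mul_of_nonneg_left hub (by nlinarith)
    have step2 : (n:ℝ) * (1 - κ) * (κ * Real.cosh κ * (W / n))
        = (1 - κ) * Real.cosh κ * (κ * W) := by
      field_simp
    have step3 : (1 - κ) * Real.cosh κ * (κ * W) ≤ (1 / (1 + κ)) * (κ * W) := by
      apply mul_le_mul_of_nonneg_right _ (by positivity)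
      rw [le_div_iff₀ (by linarith : (0:ℝ) < 1 + κ)]
      nlinarith
    have step5 : (κ / (1 + κ)) * W ≤ σ₀ κ * W := mul_le_mul_of_nonneg_right hσ hWpos.le
    have step6 : σ₀ κ * W ≤ σ₀ κ * DD κ := mul_le_mul_of_nonneg_left (hDlb κ) hσ0
    have step4 : (1 / (1 + κ)) * (κ * W) = (κ / (1 + κ)) * W := by ring
    linarith
  -- upper bound at κ = 1/4
  have hU : F (1/4) ≤ 83 * (8 * (n:ℝ) + 1) / 800 := by
    rw [hFeq, div_le_iff₀ (hNpos _ (by norm_num))]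
    have hσ := HystAux.sigma_14
    have hσ0 : (0:ℝ) ≤ σ₀ (1/4) := HystAux.sigma_nonneg (by norm_num)
    have h1 : σ₀ (1/4) * DD (1/4) ≤ (83/400) * (W + (1/8) * (W / n)) :=
      mul_le_mul hσ hD14 (le_trans hWpos.le (hDlb _)) (by norm_num)
    have h2 : (83 * (8 * (n:ℝ) + 1) / 800) * ((1/4) * (W / n))
        ≤ (83 * (8 * (n:ℝ) + 1) / 800) * NN (1/4) :=
      mul_le_mul_of_nonneg_left (hNlb (1/4) (by norm_num)) (by positivity)
    have h3 : (83/400) * (W + (1/8) * (W / n))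
        = (83 * (8 * (n:ℝ) + 1) / 800) * ((1/4) * (W / n)) := by
      field_simp
      ring
    linarith
  have hFge : ∀ κ : ℝ, 0 < κ → σ₀ κ ≤ F κ := by
    intro κ h0
    rw [hFeq, le_div_iff₀ (hNpos κ h0)]
    exact mul_le_mul_of_nonneg_left (hND κ) (HystAux.sigma_nonneg h0.le)
  have hσcont : Continuous σ₀ := by
    unfold σ₀
    fun_prop
  have hFcont : ContinuousOn F (Set.Ioi 0) := by
    have hFeq2 : F = fun κ => σ₀ κ / (NN κ / DD κ) := by
      funext κ
      show σ₀ κ / orderParam n κ = _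
      rw [hOP]
    rw [hFeq2]
    apply ContinuousOn.div hσcont.continuousOn
    · exact ContinuousOn.div (HystAux.NN_cont _).continuousOn (HystAux.DD_cont _).continuousOn
        (fun κ _ => (hDpos κ).ne')
    · intro κ hκ
      exact ne_of_gt (div_pos (hNpos κ hκ) (hDpos κ))
  set M : ℝ := (n:ℝ) ^ 2 + n with hMdef
  have hM6 : (6:ℝ) ≤ M := by nlinarith
  have hσM : σ₀ M = n := HystAux.sigma_M n
  have hK : Set.Icc (1/10 : ℝ) M ⊆ Set.Ioi 0 := fun x hx => lt_of_lt_of_le (by norm_num) hx.1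
  obtain ⟨κs, hκsK, hκsmin⟩ := isCompact_Icc.exists_isMinOn
    (⟨1/4, by constructor
              · norm_num
              · linarith⟩ : (Set.Icc (1/10 : ℝ) M).Nonempty)
    (hFcont.mono hK)
  have hκs0 : (0:ℝ) < κs := lt_of_lt_of_le (by norm_num) hκsK.1
  have h14K : (1/4 : ℝ) ∈ Set.Icc (1/10 : ℝ) M := by
    constructor
    · norm_num
    · linarith
  have hmin14 : F κs ≤ F (1/4) := isMinOn_iff.mp hκsmin (1/4) h14K
  have hUn : 83 * (8 * (n:ℝ) + 1) / 800 < (9/10) * n := by nlinarith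
  have hFκs9 : F κs < (9/10) * n := lt_of_le_of_lt (le_trans hmin14 hU) hUn
  have hFκsn : F κs < n := by nlinarith
  have hFκspos : 0 < F κs := by
    rw [hFeq]
    exact div_pos (mul_pos (HystAux.sigma_pos hκs0) (hDpos κs)) (hNpos κs hκs0)
  -- global minimality
  have hLB : ∀ κ : ℝ, 0 < κ → F κs ≤ F κ := by
    intro κ h0
    rcases lt_or_ge κ (1/10) with hlt | hge
    · have h1 : (n:ℝ) * (1 - κ) ≤ F κ := hlow κ h0 (by linarith)
      have h2 : (9/10) * (n:ℝ) ≤ (n:ℝ) * (1 - κ) := by nlinarith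
      linarith
    · rcases le_or_gt κ M with hle | hgt
      · exact isMinOn_iff.mp hκsmin κ ⟨hge, hle⟩
      · have h1 : σ₀ M ≤ σ₀ κ := HystAux.sigma_mono hgt.le
        have h2 : (n:ℝ) ≤ F κ := by
          rw [← hσM]
          exact le_trans h1 (hFge κ h0)
        linarith
  have hSleast : IsLeast (F '' Set.Ioi 0) (F κs) :=
    ⟨⟨κs, hκs0, rfl⟩, by rintro y ⟨κ, hκ, rfl⟩; exact hLB κ hκ⟩
  have hsInf : sInf (F '' Set.Ioi 0) = F κs := hSleast.csInf_eq
  refine ⟨κs, hκs0, ?_, ?_, ?_, ?_⟩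
  · rw [hsInf]
  · rw [hsInf]; exact hFκspos
  · rw [hsInf]; exact hFκsn
  · intro ρ hρ1 hρ2
    rw [hsInf] at hρ1
    have hρpos : 0 < ρ := lt_trans hFκspos hρ1
    set κ' : ℝ := min (κs / 2) (((n:ℝ) - ρ) / (4 * n)) with hκ'def
    have hκ'pos : 0 < κ' := lt_min (by linarith) (div_pos (by linarith) (by linarith))
    have hκ'lt : κ' < κs := lt_of_le_of_lt (min_le_left _ _) (by linarith)
    have hκ'1 : κ' < 1 := by
      have h := min_le_right (κs / 2) (((n:ℝ) - ρ) / (4 * n))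
      have h2 : ((n:ℝ) - ρ) / (4 * n) < 1 := by
        rw [div_lt_one (by linarith)]
        nlinarith
      linarith
    have hFκ' : ρ < F κ' := by
      have h1 := hlow κ' hκ'pos hκ'1
      have h2 : κ' ≤ ((n:ℝ) - ρ) / (4 * n) := min_le_right _ _
      have h3 : (n:ℝ) * κ' ≤ ((n:ℝ) - ρ) / 4 := by
        have h4 := mul_le_mul_of_nonneg_left h2 hnpos.le
        have h5 : (n:ℝ) * (((n:ℝ) - ρ) / (4 * n)) = ((n:ℝ) - ρ) / 4 := by
          field_simp
        linarith
      nlinarith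
    have hIcc1 : Set.Icc κ' κs ⊆ Set.Ioi 0 := fun x hx => lt_of_lt_of_le hκ'pos hx.1
    obtain ⟨κ₁, hκ₁Icc, hκ₁⟩ := intermediate_value_Icc' hκ'lt.le (hFcont.mono hIcc1)
      (⟨hρ1.le, hFκ'.le⟩ : ρ ∈ Set.Icc (F κs) (F κ'))
    have hκsM : κs < M := by
      rcases lt_or_eq_of_le hκsK.2 with h | h
      · exact h
      · exfalso
        have h2 : (n:ℝ) ≤ F κs := by
          rw [h, ← hσM]
          exact hFge M (by linarith)
        linarith
    have hIcc2 : Set.Icc κs M ⊆ Set.Ioi 0 := fun x hx => lt_of_lt_of_le hκs0 hx.1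
    have hFM : (n:ℝ) ≤ F M := by
      rw [← hσM]
      exact hFge M (by linarith)
    obtain ⟨κ₂, hκ₂Icc, hκ₂⟩ := intermediate_value_Icc hκsM.le (hFcont.mono hIcc2)
      (⟨hρ1.le, by linarith⟩ : ρ ∈ Set.Icc (F κs) (F M))
    have hκ₁pos : 0 < κ₁ := lt_of_lt_of_le hκ'pos hκ₁Icc.1
    have hκ₁lt : κ₁ < κs := by
      rcases lt_or_eq_of_le hκ₁Icc.2 with h | h
      · exact h
      · exfalso
        rw [h] at hκ₁
        linarith [hκ₁, hρ1]
    have hκ₂gt : κs < κ₂ := by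
      rcases lt_or_eq_of_le hκ₂Icc.1 with h | h
      · exact h
      · exfalso
        rw [← h] at hκ₂
        linarith [hκ₂, hρ1]
    refine ⟨κ₁, κ₂, hκ₁pos, lt_trans hκ₁lt hκ₂gt, ?_, ?_⟩
    · have hne : orderParam n κ₁ ≠ 0 := ne_of_gt (hOPpos κ₁ hκ₁pos)
      have h : σ₀ κ₁ / orderParam n κ₁ = ρ := hκ₁
      exact (div_eq_iff hne).mp h
    · have hκ₂pos : 0 < κ₂ := lt_trans hκs0 hκ₂gt
      have hne : orderParam n κ₂ ≠ 0 := ne_of_gt (hOPpos κ₂ hκ₂pos)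
      have h : σ₀ κ₂ / orderParam n κ₂ = ρ := hκ₂
      exact (div_eq_iff hne).mp h
end
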